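/- Define v : ℝ → ℝ by v(x) := exp(−x²/2)·π^(−1/2)·∫₀^∞ exp(−t² − 2xt)·t^(−1/2) dt, and for b > 0 set W₁(b) := −v′(0)·(v(b) − b·v′(b)) − v(0)·v′(b). Then W₁(b)·exp(b²/2)·b^(−3/2) tends to √π/Γ(1/4) as b → ∞, where Γ is the real Gamma function. -/

import Mathlib

open Set Real Filter MeasureTheory

/-- `v(x) = e^(−x²/2) · H_{−1/2}(x)` via the integral representation
`H_{−1/2}(x) = π^(−1/2) ∫₀^∞ e^(−t² − 2xt) t^(−1/2) dt`. -/
noncomputable def vFun (x : ℝ) : ℝ :=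
  Real.exp (-x ^ 2 / 2) * π ^ (-(1 / 2) : ℝ) *
    ∫ t in Set.Ioi (0 : ℝ), Real.exp (-t ^ 2 - 2 * x * t) * t ^ (-(1 / 2) : ℝ)

/-- The Wronskian `W₁(b) = −v′(0)(v(b) − b v′(b)) − v(0) v′(b)` of Example 5.1. -/
noncomputable def W₁ (b : ℝ) : ℝ :=
  -deriv vFun 0 * (vFun b - b * deriv vFun b) - vFun 0 * deriv vFun b

noncomputable def Ifun (x : ℝ) : ℝ :=
  ∫ t in Set.Ioi (0 : ℝ), Real.exp (-t ^ 2 - 2 * x * t) * t ^ (-(1 / 2) : ℝ)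

noncomputable def Jfun (x : ℝ) : ℝ :=
  ∫ t in Set.Ioi (0 : ℝ), Real.exp (-t ^ 2 - 2 * x * t) * t ^ ((1 / 2) : ℝ)

lemma integ (x s : ℝ) (hs : -1 < s) :
    IntegrableOn (fun t : ℝ => Real.exp (-t ^ 2 - 2 * x * t) * t ^ s) (Ioi 0) := by
  have hg : IntegrableOn (fun t : ℝ => Real.exp (2 * x ^ 2) * (t ^ s * Real.exp (-(1/2) * t ^ 2)))
      (Ioi 0) := (integrableOn_rpow_mul_exp_neg_mul_sq (by norm_num) hs).const_mul _
  refine hg.integrable.mono' ?_ ?_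
  · refine (ContinuousOn.mul ?_ (continuousOn_id.rpow_const ?_)).aestronglyMeasurable
      measurableSet_Ioi
    · exact (Real.continuous_exp.comp (by continuity)).continuousOn
    · intro t ht; exact Or.inl (ne_of_gt ht)
  · filter_upwards [ae_restrict_mem measurableSet_Ioi] with t ht
    have ht0 : 0 < t := ht
    rw [Real.norm_eq_abs, abs_of_nonneg (by positivity)]
    have h1 : Real.exp (-t ^ 2 - 2 * x * t) ≤ Real.exp (2 * x ^ 2) * Real.exp (-(1/2) * t ^ 2) := by
      rw [← Real.exp_add]
      apply Real.exp_le_exp.2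
      nlinarith [sq_nonneg (x + t / 2), sq_nonneg (t/2 + x)]
    calc Real.exp (-t ^ 2 - 2 * x * t) * t ^ s
        ≤ (Real.exp (2 * x ^ 2) * Real.exp (-(1/2) * t ^ 2)) * t ^ s := by
          apply mul_le_mul_of_nonneg_right h1 (by positivity)
      _ = Real.exp (2 * x ^ 2) * (t ^ s * Real.exp (-(1/2) * t ^ 2)) := by ring

lemma eval_exp (s b : ℝ) (hs : -1 < s) (hb : 0 < b) :
    ∫ t in Set.Ioi (0 : ℝ), Real.exp (-(b * t)) * t ^ s
      = b ^ (-(s+1)) * Real.Gamma (s + 1) := by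
  have := integral_rpow_mul_exp_neg_mul_rpow (p := 1) (q := s) (b := b) one_pos hs hb
  simp only [Real.rpow_one] at this
  simp only [neg_div, div_one, mul_one] at this
  rw [← this]
  refine setIntegral_congr_fun measurableSet_Ioi (fun t ht => ?_)
  rw [neg_mul]; ring

lemma integ_exp (s b : ℝ) (hs : -1 < s) (hb : 0 < b) :
    IntegrableOn (fun t : ℝ => Real.exp (-(b * t)) * t ^ s) (Ioi 0) := by
  have := integrableOn_rpow_mul_exp_neg_mul_rpow (p := 1) (s := s) (b := b) hs one_pos hb
  refine this.congr_fun (fun t ht => ?_) measurableSet_Ioi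
  dsimp only
  rw [Real.rpow_one, neg_mul]; ring

lemma Ifun_nonneg (x : ℝ) : 0 ≤ Ifun x :=
  setIntegral_nonneg measurableSet_Ioi fun t ht =>
    mul_nonneg (Real.exp_pos _).le (Real.rpow_nonneg (le_of_lt ht) _)

lemma Jfun_nonneg (x : ℝ) : 0 ≤ Jfun x :=
  setIntegral_nonneg measurableSet_Ioi fun t ht =>
    mul_nonneg (Real.exp_pos _).le (Real.rpow_nonneg (le_of_lt ht) _)

lemma Ifun_le {b : ℝ} (hb : 0 < b) :
    Ifun b ≤ (2 * b) ^ (-(1/2) : ℝ) * Real.Gamma (1/2) := by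
  have h := eval_exp (-(1/2)) (2*b) (by norm_num) (by positivity)
  norm_num at h
  rw [← h]
  refine setIntegral_mono_on (integ b _ (by norm_num))
    (integ_exp _ _ (by norm_num) (by positivity)) measurableSet_Ioi (fun t ht => ?_)
  have ht0 : (0:ℝ) < t := ht
  have : Real.exp (-t ^ 2 - 2 * b * t) ≤ Real.exp (-(2 * b * t)) :=
    Real.exp_le_exp.2 (by nlinarith)
  exact mul_le_mul_of_nonneg_right this (by positivity)

lemma Jfun_le {b : ℝ} (hb : 0 < b) :
    Jfun b ≤ (2 * b) ^ (-(3/2) : ℝ) * Real.Gamma (3/2) := by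
  have h := eval_exp (1/2) (2*b) (by norm_num) (by positivity)
  norm_num at h
  rw [← h]
  refine setIntegral_mono_on (integ b _ (by norm_num))
    (integ_exp _ _ (by norm_num) (by positivity)) measurableSet_Ioi (fun t ht => ?_)
  have ht0 : (0:ℝ) < t := ht
  have : Real.exp (-t ^ 2 - 2 * b * t) ≤ Real.exp (-(2 * b * t)) :=
    Real.exp_le_exp.2 (by nlinarith)
  exact mul_le_mul_of_nonneg_right this (by positivity)

lemma Ifun_ge {b : ℝ} (hb : 0 < b) :
    (2 * b) ^ (-(1/2) : ℝ) * Real.Gamma (1/2)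
      - (2 * b) ^ (-(5/2) : ℝ) * Real.Gamma (5/2) ≤ Ifun b := by
  have h1 := eval_exp (-(1/2)) (2*b) (by norm_num) (by positivity)
  have h2 := eval_exp (3/2) (2*b) (by norm_num) (by positivity)
  norm_num at h1 h2
  rw [← h1, ← h2, ← integral_sub (integ_exp _ _ (by norm_num) (by positivity))
    (integ_exp _ _ (by norm_num) (by positivity))]
  refine setIntegral_mono_on ?_ (integ b _ (by norm_num)) measurableSet_Ioi (fun t ht => ?_)
  · exact (integ_exp _ _ (by norm_num) (by positivity)).sub
      (integ_exp _ _ (by norm_num) (by positivity))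
  have ht0 : (0:ℝ) < t := ht
  have key : (1 - t ^ 2) ≤ Real.exp (-t ^ 2) := by
    have := Real.add_one_le_exp (-t ^ 2); linarith
  have h32 : t ^ ((3:ℝ)/2) = t ^ 2 * t ^ (-(1/2) : ℝ) := by
    rw [← Real.rpow_natCast t 2, ← Real.rpow_add ht0]; norm_num
  have hexp : Real.exp (-t ^ 2 - 2 * b * t) = Real.exp (-t^2) * Real.exp (-(2 * b * t)) := by
    rw [← Real.exp_add]; ring_nf
  rw [hexp, h32]
  have hrp : (0:ℝ) ≤ t ^ (-(1/2) : ℝ) := by positivity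
  have hE : (0:ℝ) ≤ Real.exp (-(2*b*t)) := (Real.exp_pos _).le
  nlinarith [mul_le_mul_of_nonneg_right key (mul_nonneg hE hrp)]

lemma hasDerivAt_Ifun (x₀ : ℝ) : HasDerivAt Ifun (-2 * Jfun x₀) x₀ := by
  have key := hasDerivAt_integral_of_dominated_loc_of_deriv_le
    (F := fun x t => Real.exp (-t ^ 2 - 2 * x * t) * t ^ (-(1/2) : ℝ))
    (F' := fun x t => -2 * (Real.exp (-t ^ 2 - 2 * x * t) * t ^ ((1/2) : ℝ)))
    (x₀ := x₀) (s := Metric.ball x₀ 1) (μ := volume.restrict (Ioi 0))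
    (bound := fun t => 2 * Real.exp (2 * (|x₀| + 1) ^ 2) * (t ^ ((1/2):ℝ) * Real.exp (-(1/2) * t ^ 2)))
    (Metric.ball_mem_nhds x₀ one_pos)
    (Eventually.of_forall fun x => (integ x _ (by norm_num)).aestronglyMeasurable)
    (integ x₀ _ (by norm_num))
    (((integ x₀ (1/2) (by norm_num)).aestronglyMeasurable).const_mul (-2))
    ?_ ?_ ?_
  · have : Ifun = fun x => ∫ t in Set.Ioi (0:ℝ), Real.exp (-t ^ 2 - 2 * x * t) * t ^ (-(1/2) : ℝ) := rfl
    rw [this]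
    refine key.2.congr_deriv ?_
    rw [Jfun, ← MeasureTheory.integral_const_mul]
  · -- bound
    filter_upwards [ae_restrict_mem measurableSet_Ioi] with t ht
    intro x hx
    have ht0 : (0:ℝ) < t := ht
    have hxb : |x| ≤ |x₀| + 1 := by
      have := mem_ball_iff_norm.1 hx
      rw [Real.norm_eq_abs] at this
      have h1 := abs_sub_abs_le_abs_sub x x₀
      linarith
    rw [norm_mul, Real.norm_eq_abs, Real.norm_eq_abs, abs_of_nonneg
      (mul_nonneg (Real.exp_pos _).le (Real.rpow_nonneg ht0.le _))]
    have h1 : Real.exp (-t ^ 2 - 2 * x * t) ≤ Real.exp (2 * (|x₀| + 1) ^ 2) * Real.exp (-(1/2) * t ^ 2) := by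
      rw [← Real.exp_add]
      apply Real.exp_le_exp.2
      have hx2 : x ^ 2 ≤ (|x₀| + 1) ^ 2 := by
        have h2 : (0:ℝ) ≤ |x₀| + 1 := by positivity
        nlinarith [sq_abs x, abs_nonneg x]
      nlinarith [sq_nonneg (x + t / 2)]
    have hrp : (0:ℝ) ≤ t ^ ((1/2):ℝ) := Real.rpow_nonneg ht0.le _
    calc |(-2:ℝ)| * (Real.exp (-t ^ 2 - 2 * x * t) * t ^ ((1/2) : ℝ))
        ≤ 2 * ((Real.exp (2 * (|x₀| + 1) ^ 2) * Real.exp (-(1/2) * t ^ 2)) * t ^ ((1/2) : ℝ)) := by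
          rw [abs_of_nonpos (by norm_num : (-2:ℝ) ≤ 0), neg_neg]
          exact mul_le_mul_of_nonneg_left (mul_le_mul_of_nonneg_right h1 hrp) (by norm_num)
      _ = 2 * Real.exp (2 * (|x₀| + 1) ^ 2) * (t ^ ((1/2):ℝ) * Real.exp (-(1/2) * t ^ 2)) := by ring
  · -- bound integrable
    exact ((integrableOn_rpow_mul_exp_neg_mul_sq (by norm_num) (by norm_num : (-1:ℝ) < 1/2)).const_mul _)
  · -- differentiability
    filter_upwards [ae_restrict_mem measurableSet_Ioi] with t ht
    intro x _
    have ht0 : (0:ℝ) < t := ht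
    have hlin : HasDerivAt (fun y : ℝ => 2 * y * t) (2 * t) x := by
      have h := ((hasDerivAt_id x).const_mul (2:ℝ)).mul_const t
      simpa using h
    have h1 : HasDerivAt (fun y : ℝ => -t ^ 2 - 2 * y * t) (-(2 * t)) x := hlin.const_sub (-t ^ 2)
    have h2 := (h1.exp).mul_const (t ^ (-(1/2) : ℝ))
    refine h2.congr_deriv ?_
    have h3 : t * t ^ (-(1/2):ℝ) = t ^ ((1/2):ℝ) := by
      nth_rewrite 1 [← Real.rpow_one t]
      rw [← Real.rpow_add ht0]; norm_num
    rw [← h3]; ring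

lemma vFun_eq (x : ℝ) : vFun x = Real.exp (-x ^ 2 / 2) * π ^ (-(1/2) : ℝ) * Ifun x := rfl

lemma hasDerivAt_vFun (x : ℝ) :
    HasDerivAt vFun
      (Real.exp (-x ^ 2 / 2) * π ^ (-(1/2) : ℝ) * (-x * Ifun x - 2 * Jfun x)) x := by
  have h0 : HasDerivAt (fun y : ℝ => -y ^ 2 / 2) (-x) x := by
    have : HasDerivAt (fun y : ℝ => -y ^ 2 / 2) (-(2 * x ^ (2-1)) / 2) x := ((hasDerivAt_pow 2 x).neg).div_const 2
    refine this.congr_deriv ?_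
    simp; ring
  have hexp := h0.exp
  have hI := hasDerivAt_Ifun x
  have := (hexp.mul_const (π ^ (-(1/2) : ℝ))).mul hI
  have hv : vFun = fun x => Real.exp (-x ^ 2 / 2) * π ^ (-(1/2) : ℝ) * Ifun x := rfl
  rw [hv]
  refine this.congr_deriv ?_
  ring

lemma Ifun_zero : Ifun 0 = Real.Gamma (1/4) / 2 := by
  have h := integral_rpow_mul_exp_neg_rpow (p := 2) (q := -(1/2)) two_pos (by norm_num)
  norm_num at h
  rw [Ifun, show Real.Gamma (1/4)/2 = 1/2 * Real.Gamma (1/4) by ring, ← h]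
  refine setIntegral_congr_fun measurableSet_Ioi (fun t ht => ?_)
  rw [mul_comm]; norm_num

lemma Jfun_zero : Jfun 0 = Real.Gamma (3/4) / 2 := by
  have h := integral_rpow_mul_exp_neg_rpow (p := 2) (q := 1/2) two_pos (by norm_num)
  norm_num at h
  rw [Jfun, show Real.Gamma (3/4)/2 = 1/2 * Real.Gamma (3/4) by ring, ← h]
  refine setIntegral_congr_fun measurableSet_Ioi (fun t ht => ?_)
  rw [mul_comm]; norm_num

lemma vFun_zero : vFun 0 = π ^ (-(1/2) : ℝ) * (Real.Gamma (1/4) / 2) := by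
  have := vFun_eq 0
  rw [this, Ifun_zero]
  norm_num

lemma deriv_vFun_zero : deriv vFun 0 = -(π ^ (-(1/2) : ℝ) * Real.Gamma (3/4)) := by
  rw [(hasDerivAt_vFun 0).deriv, Jfun_zero]
  norm_num
  exact Or.inl (by ring)

lemma rpow_helper {b : ℝ} (hb : 0 < b) (p q : ℝ) :
    b ^ p * (2 * b) ^ q = 2 ^ q * b ^ (p + q) := by
  rw [Real.mul_rpow (by norm_num) hb.le, Real.rpow_add hb]; ring

lemma aux0 {f : ℝ → ℝ} {C p : ℝ} (hp : 0 < p)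
    (h1 : ∀ᶠ b in atTop, 0 ≤ f b)
    (h2 : ∀ᶠ b in atTop, f b ≤ C * b ^ (-p)) : Tendsto f atTop (nhds 0) := by
  refine tendsto_of_tendsto_of_tendsto_of_le_of_le' tendsto_const_nhds ?_ h1 h2
  simpa using (tendsto_rpow_neg_atTop hp).const_mul C

lemma tendsto_Ifun_zero (p : ℝ) (hp : p + -(1/2) < 0) :
    Tendsto (fun b : ℝ => b ^ p * Ifun b) atTop (nhds 0) := by
  refine aux0 (C := 2 ^ (-(1/2):ℝ) * Real.Gamma (1/2)) (p := -(p + -(1/2))) (by linarith) ?_ ?_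
  · filter_upwards [eventually_gt_atTop 0] with b hb
    exact mul_nonneg (Real.rpow_nonneg hb.le _) (Ifun_nonneg b)
  · filter_upwards [eventually_gt_atTop 0] with b hb
    have h := mul_le_mul_of_nonneg_left (Ifun_le hb) (Real.rpow_nonneg hb.le p)
    rw [← mul_assoc, rpow_helper hb, neg_neg] at *
    calc b ^ p * Ifun b ≤ 2 ^ (-(1/2):ℝ) * b ^ (p + -(1/2)) * Real.Gamma (1/2) := h
      _ = 2 ^ (-(1/2):ℝ) * Real.Gamma (1/2) * b ^ (p + -(1/2)) := by ring

lemma tendsto_Jfun_zero (p : ℝ) (hp : p + -(3/2) < 0) :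
    Tendsto (fun b : ℝ => b ^ p * Jfun b) atTop (nhds 0) := by
  refine aux0 (C := 2 ^ (-(3/2):ℝ) * Real.Gamma (3/2)) (p := -(p + -(3/2))) (by linarith) ?_ ?_
  · filter_upwards [eventually_gt_atTop 0] with b hb
    exact mul_nonneg (Real.rpow_nonneg hb.le _) (Jfun_nonneg b)
  · filter_upwards [eventually_gt_atTop 0] with b hb
    have h := mul_le_mul_of_nonneg_left (Jfun_le hb) (Real.rpow_nonneg hb.le p)
    rw [← mul_assoc, rpow_helper hb, neg_neg] at *
    calc b ^ p * Jfun b ≤ 2 ^ (-(3/2):ℝ) * b ^ (p + -(3/2)) * Real.Gamma (3/2) := h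
      _ = 2 ^ (-(3/2):ℝ) * Real.Gamma (3/2) * b ^ (p + -(3/2)) := by ring

lemma tendsto_Ifun_main :
    Tendsto (fun b : ℝ => b ^ ((1:ℝ)/2) * Ifun b) atTop
      (nhds (2 ^ (-(1/2):ℝ) * Real.Gamma (1/2))) := by
  refine tendsto_of_tendsto_of_tendsto_of_le_of_le'
    (g := fun b : ℝ => 2 ^ (-(1/2):ℝ) * Real.Gamma (1/2)
      - 2 ^ (-(5/2):ℝ) * Real.Gamma (5/2) * b ^ (-(2:ℝ)))
    (h := fun _ : ℝ => 2 ^ (-(1/2):ℝ) * Real.Gamma (1/2)) ?_ tendsto_const_nhds ?_ ?_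
  · have := ((tendsto_rpow_neg_atTop (by norm_num : (0:ℝ) < 2)).const_mul
      (2 ^ (-(5/2):ℝ) * Real.Gamma (5/2))).const_sub (2 ^ (-(1/2):ℝ) * Real.Gamma (1/2))
    simpa using this
  · filter_upwards [eventually_gt_atTop 0] with b hb
    have h := mul_le_mul_of_nonneg_left (Ifun_ge hb) (Real.rpow_nonneg hb.le ((1:ℝ)/2))
    have e1 : b ^ ((1:ℝ)/2) * (2*b) ^ (-(1/2):ℝ) = 2 ^ (-(1/2):ℝ) := by
      rw [rpow_helper hb]
      norm_num
    have e2 : b ^ ((1:ℝ)/2) * (2*b) ^ (-(5/2):ℝ) = 2 ^ (-(5/2):ℝ) * b ^ (-(2:ℝ)) := by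
      rw [rpow_helper hb]
      norm_num
    calc 2 ^ (-(1/2):ℝ) * Real.Gamma (1/2) - 2 ^ (-(5/2):ℝ) * Real.Gamma (5/2) * b ^ (-(2:ℝ))
        = b ^ ((1:ℝ)/2) * ((2*b) ^ (-(1/2):ℝ) * Real.Gamma (1/2)
            - (2*b) ^ (-(5/2):ℝ) * Real.Gamma (5/2)) := by
          rw [mul_sub, ← mul_assoc, ← mul_assoc, e1, e2]; ring
      _ ≤ b ^ ((1:ℝ)/2) * Ifun b := h
  · filter_upwards [eventually_gt_atTop 0] with b hb
    have h := mul_le_mul_of_nonneg_left (Ifun_le hb) (Real.rpow_nonneg hb.le ((1:ℝ)/2))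
    have e1 : b ^ ((1:ℝ)/2) * (2*b) ^ (-(1/2):ℝ) = 2 ^ (-(1/2):ℝ) := by
      rw [rpow_helper hb]
      norm_num
    calc b ^ ((1:ℝ)/2) * Ifun b ≤ b ^ ((1:ℝ)/2) * ((2*b) ^ (-(1/2):ℝ) * Real.Gamma (1/2)) := h
      _ = 2 ^ (-(1/2):ℝ) * Real.Gamma (1/2) := by rw [← mul_assoc, e1]

lemma gamma_reflect : Real.Gamma (1/4) * Real.Gamma (3/4) = Real.sqrt 2 * π := by
  have h := Real.Gamma_mul_Gamma_one_sub (1/4)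
  rw [show (1:ℝ) - 1/4 = 3/4 by norm_num, show π * (1/4) = π/4 by ring,
    Real.sin_pi_div_four] at h
  rw [h]
  have h2 : Real.sqrt 2 ≠ 0 := by positivity
  field_simp
  linear_combination (-1) * Real.sq_sqrt (by norm_num : (0:ℝ) ≤ 2)

lemma const_eq :
    π ^ (-(1/2):ℝ) * Real.Gamma (3/4) * π ^ (-(1/2):ℝ) * (2 ^ (-(1/2):ℝ) * Real.Gamma (1/2))
      = Real.sqrt π / Real.Gamma (1/4) := by
  have hpi : (0:ℝ) < π := Real.pi_pos
  have h1 : π ^ (-(1/2):ℝ) = (Real.sqrt π)⁻¹ := by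
    rw [Real.rpow_neg hpi.le, Real.sqrt_eq_rpow]
  have h2 : (2:ℝ) ^ (-(1/2):ℝ) = (Real.sqrt 2)⁻¹ := by
    rw [Real.rpow_neg (by norm_num), Real.sqrt_eq_rpow]
  rw [h1, h2, Real.Gamma_one_half_eq]
  have hs2 : (0:ℝ) < Real.sqrt 2 := by positivity
  have hsp : (0:ℝ) < Real.sqrt π := Real.sqrt_pos.2 hpi
  have hG : (0:ℝ) < Real.Gamma (1/4) := Real.Gamma_pos_of_pos (by norm_num)
  have key := gamma_reflect
  field_simp
  nlinarith [Real.mul_self_sqrt hpi.le, Real.mul_self_sqrt (by norm_num : (0:ℝ) ≤ 2),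
    Real.sq_sqrt hpi.le]

/-- large-`b` asymptotics:
`W₁(b) e^(b²/2) b^(−3/2) → √π / Γ(1/4)` as `b → ∞`. -/
theorem stmt17 :
    Tendsto (fun b : ℝ => W₁ b * Real.exp (b ^ 2 / 2) * b ^ (-(3 / 2) : ℝ)) atTop
      (nhds (Real.sqrt π / Real.Gamma (1 / 4))) := by

  set c : ℝ := π ^ (-(1/2):ℝ) with hc
  have T1 := tendsto_Ifun_main
  have T2 := tendsto_Ifun_zero (-(1/2)) (by norm_num)
  have T3 := tendsto_Ifun_zero (-(3/2)) (by norm_num)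
  have T4 := tendsto_Jfun_zero (-(1/2)) (by norm_num)
  have T5 := tendsto_Jfun_zero (-(3/2)) (by norm_num)
  have hg : Tendsto (fun b : ℝ =>
      c * Real.Gamma (3/4) * c * (b ^ (-(3/2):ℝ) * Ifun b + b ^ ((1:ℝ)/2) * Ifun b
        + 2 * (b ^ (-(1/2):ℝ) * Jfun b))
      + c * (Real.Gamma (1/4)/2) * c * (b ^ (-(1/2):ℝ) * Ifun b
        + 2 * (b ^ (-(3/2):ℝ) * Jfun b))) atTop
      (nhds (c * Real.Gamma (3/4) * c * (0 + 2 ^ (-(1/2):ℝ) * Real.Gamma (1/2) + 2 * 0)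
        + c * (Real.Gamma (1/4)/2) * c * (0 + 2 * 0))) :=
    (((T3.add T1).add (T4.const_mul 2)).const_mul _).add
      ((T2.add (T5.const_mul 2)).const_mul _)
  have hval : c * Real.Gamma (3/4) * c * (0 + 2 ^ (-(1/2):ℝ) * Real.Gamma (1/2) + 2 * 0)
      + c * (Real.Gamma (1/4)/2) * c * (0 + 2 * 0) = Real.sqrt π / Real.Gamma (1/4) := by
    rw [← const_eq]; ring
  rw [hval] at hg
  refine hg.congr' ?_
  filter_upwards [eventually_gt_atTop 0] with b hb
  rw [W₁, vFun_eq b, (hasDerivAt_vFun b).deriv, vFun_zero, deriv_vFun_zero]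
  obtain ⟨u, hu_def⟩ : ∃ u, b ^ ((1:ℝ)/2) = u := ⟨_, rfl⟩
  have hu : 0 < u := hu_def ▸ Real.rpow_pos_of_pos hb _
  have hu2 : u * u = b := by
    rw [← hu_def, ← Real.rpow_add hb]; norm_num
  have hQ : b ^ (-(1/2):ℝ) = u⁻¹ := by
    rw [Real.rpow_neg hb.le, hu_def]
  have hR : b ^ (-(3/2):ℝ) = (b * u)⁻¹ := by
    rw [Real.rpow_neg hb.le, show ((3:ℝ)/2) = 1 + 1/2 by norm_num, Real.rpow_add hb,
      Real.rpow_one, hu_def]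
  have hE : Real.exp (b ^ 2 / 2) = (Real.exp (-b ^ 2 / 2))⁻¹ := by
    rw [show b ^ 2 / 2 = -(-b ^ 2 / 2) by ring, Real.exp_neg]
  obtain ⟨I, hI⟩ : ∃ I, Ifun b = I := ⟨_, rfl⟩
  obtain ⟨J, hJ⟩ : ∃ J, Jfun b = J := ⟨_, rfl⟩
  obtain ⟨e, he_def⟩ : ∃ e, Real.exp (-b ^ 2 / 2) = e := ⟨_, rfl⟩
  have he : e ≠ 0 := he_def ▸ Real.exp_ne_zero _
  rw [hQ, hR, hE, hu_def, hI, hJ, he_def, ← hu2]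
  have hu' : u ≠ 0 := ne_of_gt hu
  rw [hc]
  field_simp
  ring
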